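/- Let G be a group with elements g₂,…,g₅ and integers t₂₃₄, t₂₃₅, t₂₄₅, t₃₄₅ satisfying the listed commutator relations. Then for all integers x, y: g₃^x g₂^y = g₂^y g₃^x g₄^{x y t₂₃₄} g₅^{s₂(x) y t₂₃₄ t₃₄₅ + x y t₂₃₅ + x s₂(y) t₂₃₄ t₂₄₅}. -/

import Mathlib

/-- `s₂(x) = x(x-1)/2` -/
def s2 (x : ℤ) : ℤ := x * (x - 1) / 2

lemma s2_eq (x : ℤ) : 2 * s2 x = x * (x - 1) := by
  obtain ⟨k, hk⟩ := Int.even_mul_succ_self (x - 1)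
  have h1 : x * (x - 1) = 2 * k := by linear_combination hk
  unfold s2; rw [h1]; omega

lemma s2_add_one (x : ℤ) : s2 (x + 1) = s2 x + x := by
  have h1 := s2_eq (x + 1); have h2 := s2_eq x
  have : 2 * s2 (x + 1) = 2 * s2 x + 2 * x := by linear_combination h1 - h2
  omega

lemma s2_sub_one (x : ℤ) : s2 (x - 1) = s2 x - (x - 1) := by
  have h1 := s2_eq (x - 1); have h2 := s2_eq x
  have : 2 * s2 (x - 1) = 2 * s2 x - 2 * (x - 1) := by linear_combination h1 - h2
  omega

section
variable {G : Type*} [Group G]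

lemma zswap {z x : G} (h : Commute z x) (m : ℤ) : z ^ m * x = x * z ^ m :=
  (h.zpow_left m).eq
lemma zswap_inv {z x : G} (h : Commute z x) (m : ℤ) : z ^ m * x⁻¹ = x⁻¹ * z ^ m :=
  ((h.zpow_left m).inv_right).eq
lemma inv_left_rel {q a z : G} {r : ℤ} (hzq : Commute z q)
    (h : q * a = a * (q * z ^ r)) : q⁻¹ * a = a * (q⁻¹ * z ^ (-r)) := by
  have key : q * (a * (q⁻¹ * z ^ (-r))) = a := by
    calc q * (a * (q⁻¹ * z ^ (-r))) = (q * a) * (q⁻¹ * z ^ (-r)) := by group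
      _ = (a * (q * z ^ r)) * (q⁻¹ * z ^ (-r)) := by rw [h]
      _ = a * q * (z ^ r * q⁻¹) * z ^ (-r) := by group
      _ = a * q * (q⁻¹ * z ^ r) * z ^ (-r) := by rw [zswap_inv hzq]
      _ = a := by group
  calc q⁻¹ * a = q⁻¹ * (q * (a * (q⁻¹ * z ^ (-r)))) := by rw [key]
    _ = a * (q⁻¹ * z ^ (-r)) := by group
lemma inv_right_rel {q a z : G} {r : ℤ} (hza : Commute z a)
    (h : q * a = a * (q * z ^ r)) : q * a⁻¹ = a⁻¹ * (q * z ^ (-r)) := by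
  have haq : a * q = q * a * z ^ (-r) := by rw [h]; group
  calc q * a⁻¹ = a⁻¹ * ((a * q) * a⁻¹) := by group
    _ = a⁻¹ * ((q * a * z ^ (-r)) * a⁻¹) := by rw [haq]
    _ = a⁻¹ * (q * a * (z ^ (-r) * a⁻¹)) := by group
    _ = a⁻¹ * (q * a * (a⁻¹ * z ^ (-r))) := by rw [zswap_inv hza]
    _ = a⁻¹ * (q * z ^ (-r)) := by group

/-- `q^n * a = a * q^n * z^(n r)` -/
lemma pow_left_rel {q a z : G} {r : ℤ} (hza : Commute z a) (hzq : Commute z q)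
    (h : q * a = a * (q * z ^ r)) :
    ∀ n : ℤ, q ^ n * a = a * (q ^ n * z ^ (n * r)) := by
  have hinv := inv_left_rel hzq h
  intro n
  induction n using Int.induction_on with
  | zero => simp
  | succ k ih =>
    calc q ^ ((k : ℤ) + 1) * a = q ^ (k : ℤ) * (q * a) := by group
      _ = q ^ (k : ℤ) * (a * (q * z ^ r)) := by rw [h]
      _ = (q ^ (k : ℤ) * a) * (q * z ^ r) := by group
      _ = (a * (q ^ (k : ℤ) * z ^ ((k : ℤ) * r))) * (q * z ^ r) := by rw [ih]
      _ = a * (q ^ (k : ℤ) * (z ^ ((k : ℤ) * r) * q) * z ^ r) := by group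
      _ = a * (q ^ (k : ℤ) * (q * z ^ ((k : ℤ) * r)) * z ^ r) := by rw [zswap hzq]
      _ = a * (q ^ ((k : ℤ) + 1) * z ^ (((k : ℤ) + 1) * r)) := by group
  | pred k ih =>
    calc q ^ (-(k : ℤ) - 1) * a = q ^ (-(k : ℤ)) * (q⁻¹ * a) := by group
      _ = q ^ (-(k : ℤ)) * (a * (q⁻¹ * z ^ (-r))) := by rw [hinv]
      _ = (q ^ (-(k : ℤ)) * a) * (q⁻¹ * z ^ (-r)) := by group
      _ = (a * (q ^ (-(k : ℤ)) * z ^ (-(k : ℤ) * r))) * (q⁻¹ * z ^ (-r)) := by rw [ih]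
      _ = a * (q ^ (-(k : ℤ)) * (z ^ (-(k : ℤ) * r) * q⁻¹) * z ^ (-r)) := by group
      _ = a * (q ^ (-(k : ℤ)) * (q⁻¹ * z ^ (-(k : ℤ) * r)) * z ^ (-r)) := by rw [zswap_inv hzq]
      _ = a * (q ^ (-(k : ℤ) - 1) * z ^ ((-(k : ℤ) - 1) * r)) := by group

/-- `q * a^n = a^n * q * z^(n r)` -/
lemma pow_right_rel {q a z : G} {r : ℤ} (hza : Commute z a) (hzq : Commute z q)
    (h : q * a = a * (q * z ^ r)) :
    ∀ n : ℤ, q * a ^ n = a ^ n * (q * z ^ (n * r)) := by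
  have hinv := inv_right_rel hza h
  intro n
  induction n using Int.induction_on with
  | zero => simp
  | succ k ih =>
    calc q * a ^ ((k : ℤ) + 1) = (q * a ^ (k : ℤ)) * a := by group
      _ = (a ^ (k : ℤ) * (q * z ^ ((k : ℤ) * r))) * a := by rw [ih]
      _ = a ^ (k : ℤ) * q * (z ^ ((k : ℤ) * r) * a) := by group
      _ = a ^ (k : ℤ) * q * (a * z ^ ((k : ℤ) * r)) := by rw [zswap hza]
      _ = a ^ (k : ℤ) * (q * a) * z ^ ((k : ℤ) * r) := by group
      _ = a ^ (k : ℤ) * (a * (q * z ^ r)) * z ^ ((k : ℤ) * r) := by rw [h]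
      _ = a ^ ((k : ℤ) + 1) * (q * z ^ (((k : ℤ) + 1) * r)) := by group
  | pred k ih =>
    calc q * a ^ (-(k : ℤ) - 1) = (q * a ^ (-(k : ℤ))) * a⁻¹ := by group
      _ = (a ^ (-(k : ℤ)) * (q * z ^ (-(k : ℤ) * r))) * a⁻¹ := by rw [ih]
      _ = a ^ (-(k : ℤ)) * q * (z ^ (-(k : ℤ) * r) * a⁻¹) := by group
      _ = a ^ (-(k : ℤ)) * q * (a⁻¹ * z ^ (-(k : ℤ) * r)) := by rw [zswap_inv hza]
      _ = a ^ (-(k : ℤ)) * (q * a⁻¹) * z ^ (-(k : ℤ) * r) := by group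
      _ = a ^ (-(k : ℤ)) * (a⁻¹ * (q * z ^ (-r))) * z ^ (-(k : ℤ) * r) := by rw [hinv]
      _ = a ^ (-(k : ℤ) - 1) * (q * z ^ ((-(k : ℤ) - 1) * r)) := by group
end
section
variable {G : Type*} [Group G]

lemma zzswap {z x : G} (h : Commute z x) (m n : ℤ) : z ^ m * x ^ n = x ^ n * z ^ m :=
  (h.zpow_zpow m n).eq

lemma inv_left_rel2 {a u q z : G} {r s : ℤ} (hzu : Commute z u) (hzq : Commute z q)
    (hqu : q * u = u * (q * z ^ r)) (h : u * a = a * (u * (q * z ^ s))) :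
    u⁻¹ * a = a * (u⁻¹ * (q⁻¹ * z ^ (r - s))) := by
  have key : u * (a * (u⁻¹ * (q⁻¹ * z ^ (r - s)))) = a := by
    calc u * (a * (u⁻¹ * (q⁻¹ * z ^ (r - s))))
        = (u * a) * (u⁻¹ * (q⁻¹ * z ^ (r - s))) := by group
      _ = (a * (u * (q * z ^ s))) * (u⁻¹ * (q⁻¹ * z ^ (r - s))) := by rw [h]
      _ = a * (u * (q * (z ^ s * u⁻¹)) * (q⁻¹ * z ^ (r - s))) := by group
      _ = a * (u * (q * (u⁻¹ * z ^ s)) * (q⁻¹ * z ^ (r - s))) := by rw [zswap_inv hzu]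
      _ = a * (u * (q * u⁻¹) * (z ^ s * q⁻¹) * z ^ (r - s)) := by group
      _ = a * (u * (u⁻¹ * (q * z ^ (-r))) * (z ^ s * q⁻¹) * z ^ (r - s)) := by
            rw [inv_right_rel hzu hqu]
      _ = a * (q * (z ^ (-r + s) * q⁻¹) * z ^ (r - s)) := by group
      _ = a * (q * (q⁻¹ * z ^ (-r + s)) * z ^ (r - s)) := by rw [zswap_inv hzq]
      _ = a := by group
  calc u⁻¹ * a = u⁻¹ * (u * (a * (u⁻¹ * (q⁻¹ * z ^ (r - s))))) := by rw [key]
    _ = a * (u⁻¹ * (q⁻¹ * z ^ (r - s))) := by group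

lemma inv_right_rel2 {a u q z : G} {r s : ℤ} (hza : Commute z a) (hzq : Commute z q)
    (hqa : q * a = a * (q * z ^ r)) (h : u * a = a * (u * (q * z ^ s))) :
    u * a⁻¹ = a⁻¹ * (u * (q⁻¹ * z ^ (r - s))) := by
  have hau : a * u = u * a * (z ^ (-s) * q⁻¹) := by rw [h]; group
  have hq' := inv_left_rel hzq hqa
  have hq'' := inv_right_rel hza hq'
  calc u * a⁻¹ = a⁻¹ * ((a * u) * a⁻¹) := by group
    _ = a⁻¹ * ((u * a * (z ^ (-s) * q⁻¹)) * a⁻¹) := by rw [hau]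
    _ = a⁻¹ * (u * a * (q⁻¹ * z ^ (-s)) * a⁻¹) := by rw [zswap_inv hzq]
    _ = a⁻¹ * (u * a * q⁻¹ * (z ^ (-s) * a⁻¹)) := by group
    _ = a⁻¹ * (u * a * q⁻¹ * (a⁻¹ * z ^ (-s))) := by rw [zswap_inv hza]
    _ = a⁻¹ * (u * (a * ((q⁻¹ * a⁻¹) * z ^ (-s)))) := by group
    _ = a⁻¹ * (u * (a * ((a⁻¹ * (q⁻¹ * z ^ (- -r))) * z ^ (-s)))) := by rw [hq'']
    _ = a⁻¹ * (u * (q⁻¹ * z ^ (r - s))) := by group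

lemma pow_left_rel2 {a u q z : G} {r s : ℤ} (hza : Commute z a) (hzu : Commute z u)
    (hzq : Commute z q)
    (hqu : q * u = u * (q * z ^ r)) (h : u * a = a * (u * (q * z ^ s))) :
    ∀ n : ℤ, u ^ n * a = a * (u ^ n * (q ^ n * z ^ (s * n + r * s2 n))) := by
  have hq_u := pow_left_rel hzu hzq hqu
  have hq_uinv : ∀ m : ℤ, q ^ m * u⁻¹ = u⁻¹ * (q ^ m * z ^ (-(m * r))) :=
    fun m => inv_right_rel hzu (hq_u m)
  have hinv := inv_left_rel2 hzu hzq hqu h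
  intro n
  induction n using Int.induction_on with
  | zero => norm_num [s2]
  | succ k ih =>
    rw [s2_add_one]
    calc u ^ ((k : ℤ) + 1) * a = u ^ (k : ℤ) * (u * a) := by group
      _ = u ^ (k : ℤ) * (a * (u * (q * z ^ s))) := by rw [h]
      _ = (u ^ (k : ℤ) * a) * (u * (q * z ^ s)) := by group
      _ = (a * (u ^ (k : ℤ) * (q ^ (k : ℤ) * z ^ (s * (k : ℤ) + r * s2 (k : ℤ)))))
            * (u * (q * z ^ s)) := by rw [ih]
      _ = a * (u ^ (k : ℤ) * (q ^ (k : ℤ)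
            * ((z ^ (s * (k : ℤ) + r * s2 (k : ℤ)) * u) * (q * z ^ s)))) := by group
      _ = a * (u ^ (k : ℤ) * (q ^ (k : ℤ)
            * ((u * z ^ (s * (k : ℤ) + r * s2 (k : ℤ))) * (q * z ^ s)))) := by rw [zswap hzu]
      _ = a * (u ^ (k : ℤ) * ((q ^ (k : ℤ) * u)
            * (z ^ (s * (k : ℤ) + r * s2 (k : ℤ)) * (q * z ^ s)))) := by group
      _ = a * (u ^ (k : ℤ) * ((u * (q ^ (k : ℤ) * z ^ ((k : ℤ) * r)))
            * (z ^ (s * (k : ℤ) + r * s2 (k : ℤ)) * (q * z ^ s)))) := by rw [hq_u]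
      _ = a * (u ^ ((k : ℤ) + 1) * (q ^ (k : ℤ)
            * (z ^ ((k : ℤ) * r + (s * (k : ℤ) + r * s2 (k : ℤ))) * q) * z ^ s)) := by group
      _ = a * (u ^ ((k : ℤ) + 1) * (q ^ (k : ℤ)
            * (q * z ^ ((k : ℤ) * r + (s * (k : ℤ) + r * s2 (k : ℤ)))) * z ^ s)) := by
            rw [zswap hzq]
      _ = a * (u ^ ((k : ℤ) + 1) * (q ^ ((k : ℤ) + 1)
            * z ^ (s * ((k : ℤ) + 1) + r * (s2 (k : ℤ) + (k : ℤ))))) := by group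
  | pred k ih =>
    rw [s2_sub_one]
    calc u ^ (-(k : ℤ) - 1) * a = u ^ (-(k : ℤ)) * (u⁻¹ * a) := by group
      _ = u ^ (-(k : ℤ)) * (a * (u⁻¹ * (q⁻¹ * z ^ (r - s)))) := by rw [hinv]
      _ = (u ^ (-(k : ℤ)) * a) * (u⁻¹ * (q⁻¹ * z ^ (r - s))) := by group
      _ = (a * (u ^ (-(k : ℤ)) * (q ^ (-(k : ℤ)) * z ^ (s * (-(k : ℤ)) + r * s2 (-(k : ℤ))))))
            * (u⁻¹ * (q⁻¹ * z ^ (r - s))) := by rw [ih]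
      _ = a * (u ^ (-(k : ℤ)) * (q ^ (-(k : ℤ))
            * ((z ^ (s * (-(k : ℤ)) + r * s2 (-(k : ℤ))) * u⁻¹) * (q⁻¹ * z ^ (r - s))))) := by
            group
      _ = a * (u ^ (-(k : ℤ)) * (q ^ (-(k : ℤ))
            * ((u⁻¹ * z ^ (s * (-(k : ℤ)) + r * s2 (-(k : ℤ)))) * (q⁻¹ * z ^ (r - s))))) := by
            rw [zswap_inv hzu]
      _ = a * (u ^ (-(k : ℤ)) * ((q ^ (-(k : ℤ)) * u⁻¹)
            * (z ^ (s * (-(k : ℤ)) + r * s2 (-(k : ℤ))) * (q⁻¹ * z ^ (r - s))))) := by group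
      _ = a * (u ^ (-(k : ℤ)) * ((u⁻¹ * (q ^ (-(k : ℤ)) * z ^ (-(-(k : ℤ) * r))))
            * (z ^ (s * (-(k : ℤ)) + r * s2 (-(k : ℤ))) * (q⁻¹ * z ^ (r - s))))) := by
            rw [hq_uinv]
      _ = a * (u ^ (-(k : ℤ) - 1) * (q ^ (-(k : ℤ))
            * (z ^ (-(-(k : ℤ) * r) + (s * (-(k : ℤ)) + r * s2 (-(k : ℤ)))) * q⁻¹)
            * z ^ (r - s))) := by group
      _ = a * (u ^ (-(k : ℤ) - 1) * (q ^ (-(k : ℤ))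
            * (q⁻¹ * z ^ (-(-(k : ℤ) * r) + (s * (-(k : ℤ)) + r * s2 (-(k : ℤ)))))
            * z ^ (r - s))) := by rw [zswap_inv hzq]
      _ = a * (u ^ (-(k : ℤ) - 1) * (q ^ (-(k : ℤ) - 1)
            * z ^ (s * (-(k : ℤ) - 1) + r * (s2 (-(k : ℤ)) - (-(k : ℤ) - 1))))) := by group

lemma pow_right_rel2 {a u q z : G} {r s : ℤ} (hza : Commute z a) (hzu : Commute z u)
    (hzq : Commute z q)
    (hqa : q * a = a * (q * z ^ r)) (h : u * a = a * (u * (q * z ^ s))) :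
    ∀ n : ℤ, u * a ^ n = a ^ n * (u * (q ^ n * z ^ (s * n + r * s2 n))) := by
  have hq_a := pow_left_rel hza hzq hqa
  have hq_ainv : ∀ m : ℤ, q ^ m * a⁻¹ = a⁻¹ * (q ^ m * z ^ (-(m * r))) :=
    fun m => inv_right_rel hza (hq_a m)
  have hinv := inv_right_rel2 hza hzq hqa h
  intro n
  induction n using Int.induction_on with
  | zero => norm_num [s2]
  | succ k ih =>
    rw [s2_add_one]
    calc u * a ^ ((k : ℤ) + 1) = (u * a ^ (k : ℤ)) * a := by group
      _ = (a ^ (k : ℤ) * (u * (q ^ (k : ℤ) * z ^ (s * (k : ℤ) + r * s2 (k : ℤ))))) * a := by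
            rw [ih]
      _ = a ^ (k : ℤ) * (u * (q ^ (k : ℤ)
            * (z ^ (s * (k : ℤ) + r * s2 (k : ℤ)) * a))) := by group
      _ = a ^ (k : ℤ) * (u * (q ^ (k : ℤ)
            * (a * z ^ (s * (k : ℤ) + r * s2 (k : ℤ))))) := by rw [zswap hza]
      _ = a ^ (k : ℤ) * (u * ((q ^ (k : ℤ) * a)
            * z ^ (s * (k : ℤ) + r * s2 (k : ℤ)))) := by group
      _ = a ^ (k : ℤ) * (u * ((a * (q ^ (k : ℤ) * z ^ ((k : ℤ) * r)))
            * z ^ (s * (k : ℤ) + r * s2 (k : ℤ)))) := by rw [hq_a]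
      _ = a ^ (k : ℤ) * ((u * a) * (q ^ (k : ℤ)
            * z ^ ((k : ℤ) * r + (s * (k : ℤ) + r * s2 (k : ℤ))))) := by group
      _ = a ^ (k : ℤ) * ((a * (u * (q * z ^ s))) * (q ^ (k : ℤ)
            * z ^ ((k : ℤ) * r + (s * (k : ℤ) + r * s2 (k : ℤ))))) := by rw [h]
      _ = a ^ ((k : ℤ) + 1) * (u * q * (z ^ s * q ^ (k : ℤ))
            * z ^ ((k : ℤ) * r + (s * (k : ℤ) + r * s2 (k : ℤ)))) := by group
      _ = a ^ ((k : ℤ) + 1) * (u * q * (q ^ (k : ℤ) * z ^ s)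
            * z ^ ((k : ℤ) * r + (s * (k : ℤ) + r * s2 (k : ℤ)))) := by rw [zzswap hzq]
      _ = a ^ ((k : ℤ) + 1) * (u * (q ^ ((k : ℤ) + 1)
            * z ^ (s * ((k : ℤ) + 1) + r * (s2 (k : ℤ) + (k : ℤ))))) := by group
  | pred k ih =>
    rw [s2_sub_one]
    calc u * a ^ (-(k : ℤ) - 1) = (u * a ^ (-(k : ℤ))) * a⁻¹ := by group
      _ = (a ^ (-(k : ℤ)) * (u * (q ^ (-(k : ℤ))
            * z ^ (s * (-(k : ℤ)) + r * s2 (-(k : ℤ)))))) * a⁻¹ := by rw [ih]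
      _ = a ^ (-(k : ℤ)) * (u * (q ^ (-(k : ℤ))
            * (z ^ (s * (-(k : ℤ)) + r * s2 (-(k : ℤ))) * a⁻¹))) := by group
      _ = a ^ (-(k : ℤ)) * (u * (q ^ (-(k : ℤ))
            * (a⁻¹ * z ^ (s * (-(k : ℤ)) + r * s2 (-(k : ℤ)))))) := by rw [zswap_inv hza]
      _ = a ^ (-(k : ℤ)) * (u * ((q ^ (-(k : ℤ)) * a⁻¹)
            * z ^ (s * (-(k : ℤ)) + r * s2 (-(k : ℤ))))) := by group
      _ = a ^ (-(k : ℤ)) * (u * ((a⁻¹ * (q ^ (-(k : ℤ)) * z ^ (-(-(k : ℤ) * r))))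
            * z ^ (s * (-(k : ℤ)) + r * s2 (-(k : ℤ))))) := by rw [hq_ainv]
      _ = a ^ (-(k : ℤ)) * ((u * a⁻¹) * (q ^ (-(k : ℤ))
            * z ^ (-(-(k : ℤ) * r) + (s * (-(k : ℤ)) + r * s2 (-(k : ℤ)))))) := by group
      _ = a ^ (-(k : ℤ)) * ((a⁻¹ * (u * (q⁻¹ * z ^ (r - s)))) * (q ^ (-(k : ℤ))
            * z ^ (-(-(k : ℤ) * r) + (s * (-(k : ℤ)) + r * s2 (-(k : ℤ)))))) := by rw [hinv]
      _ = a ^ (-(k : ℤ) - 1) * (u * q⁻¹ * (z ^ (r - s) * q ^ (-(k : ℤ)))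
            * z ^ (-(-(k : ℤ) * r) + (s * (-(k : ℤ)) + r * s2 (-(k : ℤ))))) := by group
      _ = a ^ (-(k : ℤ) - 1) * (u * q⁻¹ * (q ^ (-(k : ℤ)) * z ^ (r - s))
            * z ^ (-(-(k : ℤ) * r) + (s * (-(k : ℤ)) + r * s2 (-(k : ℤ))))) := by rw [zzswap hzq]
      _ = a ^ (-(k : ℤ) - 1) * (u * (q ^ (-(k : ℤ) - 1)
            * z ^ (s * (-(k : ℤ) - 1) + r * (s2 (-(k : ℤ)) - (-(k : ℤ) - 1))))) := by group
end

/-- Commutation formula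
`g₃^x g₂^y = g₂^y g₃^x g₄^{xy t₂₃₄} g₅^{s₂(x) y t₂₃₄ t₃₄₅ + xy t₂₃₅ + x s₂(y) t₂₃₄ t₂₄₅}`. -/
theorem g3_g2_power_commutation (G : Type*) [Group G] (g2 g3 g4 g5 : G)
    (t234 t235 t245 t345 : ℤ)
    (h32 : g3⁻¹ * g2⁻¹ * g3 * g2 = g4 ^ t234 * g5 ^ t235)
    (h42 : g4⁻¹ * g2⁻¹ * g4 * g2 = g5 ^ t245)
    (h43 : g4⁻¹ * g3⁻¹ * g4 * g3 = g5 ^ t345)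
    (h52 : g5⁻¹ * g2⁻¹ * g5 * g2 = 1)
    (h53 : g5⁻¹ * g3⁻¹ * g5 * g3 = 1)
    (h54 : g5⁻¹ * g4⁻¹ * g5 * g4 = 1) :
    ∀ x y : ℤ,
      g3 ^ x * g2 ^ y
        = g2 ^ y * g3 ^ x * g4 ^ (x * y * t234)
            * g5 ^ (s2 x * y * t234 * t345 + x * y * t235 + x * s2 y * t234 * t245) := by
  -- g5 commutes with g2, g3, g4
  have c2 : Commute g5 g2 := by
    show g5 * g2 = g2 * g5
    calc g5 * g2 = (g2 * g5) * (g5⁻¹ * g2⁻¹ * g5 * g2) := by group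
      _ = (g2 * g5) * 1 := by rw [h52]
      _ = g2 * g5 := by group
  have c3 : Commute g5 g3 := by
    show g5 * g3 = g3 * g5
    calc g5 * g3 = (g3 * g5) * (g5⁻¹ * g3⁻¹ * g5 * g3) := by group
      _ = (g3 * g5) * 1 := by rw [h53]
      _ = g3 * g5 := by group
  have c4 : Commute g5 g4 := by
    show g5 * g4 = g4 * g5
    calc g5 * g4 = (g4 * g5) * (g5⁻¹ * g4⁻¹ * g5 * g4) := by group
      _ = (g4 * g5) * 1 := by rw [h54]
      _ = g4 * g5 := by group
  -- base relations in right-associated form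
  have R32 : g3 * g2 = g2 * (g3 * (g4 ^ t234 * g5 ^ t235)) := by
    calc g3 * g2 = (g2 * g3) * (g3⁻¹ * g2⁻¹ * g3 * g2) := by group
      _ = (g2 * g3) * (g4 ^ t234 * g5 ^ t235) := by rw [h32]
      _ = g2 * (g3 * (g4 ^ t234 * g5 ^ t235)) := by group
  have R42 : g4 * g2 = g2 * (g4 * g5 ^ t245) := by
    calc g4 * g2 = (g2 * g4) * (g4⁻¹ * g2⁻¹ * g4 * g2) := by group
      _ = (g2 * g4) * g5 ^ t245 := by rw [h42]
      _ = g2 * (g4 * g5 ^ t245) := by group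
  have R43 : g4 * g3 = g3 * (g4 * g5 ^ t345) := by
    calc g4 * g3 = (g3 * g4) * (g4⁻¹ * g3⁻¹ * g4 * g3) := by group
      _ = (g3 * g4) * g5 ^ t345 := by rw [h43]
      _ = g3 * (g4 * g5 ^ t345) := by group
  intro x y
  -- the element q = g4 ^ t234
  have cq : Commute g5 (g4 ^ t234) := c4.zpow_right t234
  -- q * g3 = g3 * (q * g5 ^ (t234 * t345))
  have hqu : g4 ^ t234 * g3 = g3 * (g4 ^ t234 * g5 ^ (t234 * t345)) :=
    pow_left_rel c3 c4 R43 t234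
  -- R32 in the shape needed
  have R32' : g3 * g2 = g2 * (g3 * (g4 ^ t234 * g5 ^ t235)) := R32
  -- g3^x * g2 = g2 * (g3^x * ((g4^t234)^x * g5^(t235*x + (t234*t345)*s2 x)))
  have F := pow_left_rel2 c2 c3 cq hqu R32' x
  -- (g4^t234)^x * g2 = g2 * ((g4^t234)^x * g5^((t234*x)*t245))
  have hQ2 : (g4 ^ t234) ^ x * g2 = g2 * ((g4 ^ t234) ^ x * g5 ^ (t234 * x * t245)) := by
    rw [← zpow_mul]
    exact pow_left_rel c2 c4 R42 (t234 * x)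
  have key := pow_right_rel2 c2 (c3.zpow_right x) (cq.zpow_right x) hQ2 F y
  calc g3 ^ x * g2 ^ y
      = g2 ^ y * (g3 ^ x * (((g4 ^ t234) ^ x) ^ y
          * g5 ^ ((t235 * x + t234 * t345 * s2 x) * y + t234 * x * t245 * s2 y))) := key
    _ = g2 ^ y * g3 ^ x * g4 ^ (x * y * t234)
          * g5 ^ (s2 x * y * t234 * t345 + x * y * t235 + x * s2 y * t234 * t245) := by
        rw [← zpow_mul, ← zpow_mul,
          show t234 * (x * y) = x * y * t234 by ring,
          show (t235 * x + t234 * t345 * s2 x) * y + t234 * x * t245 * s2 y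
            = s2 x * y * t234 * t345 + x * y * t235 + x * s2 y * t234 * t245 by ring]
        group
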